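/- Let A be an associative unital ℂ-algebra of countable dimension, let g be a ℂ-algebra automorphism of A of finite order T, and let M be a simple A-module. Suppose φ : M → M is a ℂ-linear bijection with φ(a•m) = (g·a)•φ(m) for all a ∈ A, m ∈ M, and φ^T = id_M. Fix a primitive T-th root of unity η, and set M_i = {m ∈ M : φ(m) = η^i m} and A_j = {a ∈ A : g·a = η^j a} for i, j ∈ ℤ/Tℤ. Then: (1) M = ⊕_{i=0}^{T-1} M_i and A_j • M_i ⊆ M_{i+j mod T}; (2) each nonzero M_i is a simple module over the fixed-point subalgebra A^{⟨g⟩}; (3) for i ≠ j, nonzero M_i and M_j are non-isomorphic as A^{⟨g⟩}-modules. -/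

import Mathlib

open scoped Cardinal DirectSum

/-- The fixed-point subalgebra `A^⟨g⟩` of a `ℂ`-algebra automorphism `g` of `A`. -/
def cyclicFixedSubalgebra {A : Type*} [Ring A] [Algebra ℂ A] (g : A ≃ₐ[ℂ] A) :
    Subalgebra ℂ A where
  carrier := {a : A | g a = a}
  mul_mem' {x y} hx hy := by
    have hx' : g x = x := hx
    have hy' : g y = y := hy
    show g (x * y) = x * y
    rw [map_mul, hx', hy']
  add_mem' {x y} hx hy := by
    have hx' : g x = x := hx
    have hy' : g y = y := hy
    show g (x + y) = x + y
    rw [map_add, hx', hy']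
  algebraMap_mem' r := by
    show g (algebraMap ℂ A r) = algebraMap ℂ A r
    exact g.commutes r

/-- The `η^i`-eigenspace `M_i = {m ∈ M : φ(m) = η^i m}` of a `g`-equivariant linear
bijection `φ` of an `A`-module `M`, regarded as a module over the fixed-point
subalgebra `A^⟨g⟩`. -/
def phiEigenspace {A : Type*} [Ring A] [Algebra ℂ A] (g : A ≃ₐ[ℂ] A)
    {M : Type*} [AddCommGroup M] [Module ℂ M] [Module A M] [IsScalarTower ℂ A M]
    {T : ℕ} (η : ℂ) (φ : M ≃ₗ[ℂ] M)
    (hφ : ∀ (a : A) (m : M), φ (a • m) = (g a) • φ m) (i : ZMod T) :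
    Submodule (cyclicFixedSubalgebra g) M where
  carrier := {m : M | φ m = η ^ i.val • m}
  add_mem' {x y} hx hy := by
    have hx' : φ x = η ^ i.val • x := hx
    have hy' : φ y = η ^ i.val • y := hy
    show φ (x + y) = η ^ i.val • (x + y)
    rw [map_add, hx', hy', smul_add]
  zero_mem' := by
    show φ 0 = η ^ i.val • (0 : M)
    simp
  smul_mem' := by
    rintro ⟨a, ha⟩ m hm
    have ha' : g a = a := ha
    have hm' : φ m = η ^ i.val • m := hm
    show φ (a • m) = η ^ i.val • (a • m)
    rw [hφ a m, ha', hm']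
    exact smul_comm a (η ^ i.val) m

/-- The eigenspace `A_j = {a ∈ A : g·a = η^j a}` of the automorphism `g`. -/
def autEigenspace {A : Type*} [Ring A] [Algebra ℂ A] (g : A ≃ₐ[ℂ] A)
    {T : ℕ} (η : ℂ) (j : ZMod T) : Set A :=
  {a : A | g a = η ^ j.val • a}


section Proj

variable {T : ℕ} [NeZero T] {η : ℂ}

private lemma sum_zmod {β : Type*} [AddCommMonoid β] (f : ℕ → β) :
    ∑ i : ZMod T, f (ZMod.val i) = ∑ k ∈ Finset.range T, f k := by
  refine Finset.sum_nbij' (fun i => ZMod.val i) (fun k => (k : ZMod T))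
    (fun a _ => Finset.mem_range.2 (ZMod.val_lt a)) (fun a _ => Finset.mem_univ _)
    (fun a _ => ZMod.natCast_rightInverse a)
    (fun a ha => ZMod.val_cast_of_lt (Finset.mem_range.1 ha)) (fun a _ => rfl)

variable {V : Type*} [AddCommGroup V] [Module ℂ V]

/-- Averaging projection onto the `η^i.val`-eigenspace of `σ`. -/
noncomputable def avgProj (η : ℂ) (σ : Module.End ℂ V) (i : ZMod T) : Module.End ℂ V :=
  (T : ℂ)⁻¹ • ∑ k ∈ Finset.range T, (η ^ (i.val * k))⁻¹ • σ ^ k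

lemma avgProj_apply (σ : Module.End ℂ V) (i : ZMod T) (v : V) :
    avgProj η σ i v = (T : ℂ)⁻¹ • ∑ k ∈ Finset.range T, (η ^ (i.val * k))⁻¹ • (σ ^ k) v := by
  simp [avgProj, LinearMap.sum_apply]

private lemma geom_zero {x : ℂ} (hx : x ^ T = 1) (hx1 : x ≠ 1) :
    ∑ k ∈ Finset.range T, x ^ k = 0 := by
  rw [geom_sum_eq hx1, hx, sub_self, zero_div]

lemma avgProj_apply_of_eig (hη : IsPrimitiveRoot η T) (σ : Module.End ℂ V) {i : ZMod T} {v : V}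
    (hv : σ v = η ^ i.val • v) (j : ZMod T) :
    avgProj η σ j v = if j = i then v else 0 := by
  have hη0 : η ≠ 0 := hη.ne_zero (NeZero.ne T)
  have hpow : ∀ k, (σ ^ k) v = (η ^ i.val) ^ k • v := by
    intro k
    induction k with
    | zero => simp
    | succ n ih => rw [pow_succ', Module.End.mul_apply, ih, map_smul, hv, smul_smul, pow_succ',
        mul_comm]
  rw [avgProj_apply]
  have hterm : ∀ k, (η ^ (j.val * k))⁻¹ • (σ ^ k) v
      = ((η ^ i.val * (η ^ j.val)⁻¹) ^ k) • v := by
    intro k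
    rw [hpow, smul_smul]
    congr 1
    ring
  simp_rw [hterm, ← Finset.sum_smul, smul_smul]
  have hηT : η ^ T = 1 := hη.pow_eq_one
  have hvalT : ∀ n : ℕ, (η ^ n) ^ T = 1 := fun n => by
    rw [← pow_mul, mul_comm, pow_mul, hηT, one_pow]
  by_cases hij : j = i
  · subst hij
    rw [if_pos rfl, mul_inv_cancel₀ (pow_ne_zero _ hη0)]
    simp only [one_pow, Finset.sum_const, Finset.card_range, nsmul_eq_mul, mul_one]
    rw [inv_mul_cancel₀ (Nat.cast_ne_zero.2 (NeZero.ne T)), one_smul]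
  · rw [if_neg hij]
    have hx1 : η ^ i.val * (η ^ j.val)⁻¹ ≠ 1 := by
      intro h
      apply hij
      rw [mul_inv_eq_one₀ (pow_ne_zero _ hη0)] at h
      have hval := hη.pow_inj (ZMod.val_lt i) (ZMod.val_lt j) h
      calc j = ((j.val : ℕ) : ZMod T) := (ZMod.natCast_rightInverse j).symm
        _ = ((i.val : ℕ) : ZMod T) := by rw [hval]
        _ = i := ZMod.natCast_rightInverse i
    have hxT : (η ^ i.val * (η ^ j.val)⁻¹) ^ T = 1 := by
      rw [mul_pow, hvalT, inv_pow, hvalT, inv_one, mul_one]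
    rw [geom_zero hxT hx1, mul_zero, zero_smul]

lemma sum_avgProj (hη : IsPrimitiveRoot η T) (σ : Module.End ℂ V) (hσ : σ ^ T = 1) (v : V) :
    ∑ i : ZMod T, avgProj η σ i v = v := by
  have hT0 : (T : ℂ) ≠ 0 := Nat.cast_ne_zero.2 (NeZero.ne T)
  simp_rw [avgProj_apply, ← Finset.smul_sum]
  rw [Finset.sum_comm]
  have hinner : ∀ k ∈ Finset.range T,
      ∑ i : ZMod T, (η ^ ((i : ZMod T).val * k))⁻¹ • (σ ^ k) v
      = (if k = 0 then (T : ℂ) else 0) • (σ ^ k) v := by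
    intro k hk
    rw [← Finset.sum_smul]
    congr 1
    have : ∀ i : ZMod T, (η ^ (i.val * k))⁻¹ = ((η ^ k)⁻¹) ^ i.val := by
      intro i
      ring
    simp_rw [this]
    rw [sum_zmod (fun n => ((η ^ k)⁻¹) ^ n)]
    by_cases hk0 : k = 0
    · subst hk0; simp
    · rw [if_neg hk0]
      refine geom_zero ?_ ?_
      · have : ((η ^ k)⁻¹) ^ T = ((η ^ T) ^ k)⁻¹ := by ring
        rw [this, hη.pow_eq_one, one_pow, inv_one]
      · rw [ne_eq, inv_eq_one]
        exact hη.pow_ne_one_of_pos_of_lt hk0 (Finset.mem_range.1 hk)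
  rw [Finset.sum_congr rfl hinner, Finset.sum_eq_single 0]
  · simp [smul_smul, inv_mul_cancel₀ hT0]
  · intro k _ hk0
    rw [if_neg hk0, zero_smul]
  · intro h
    exact absurd (Finset.mem_range.2 (Nat.pos_of_ne_zero (NeZero.ne T))) h

lemma avgProj_eig (hη : IsPrimitiveRoot η T) (σ : Module.End ℂ V) (hσ : σ ^ T = 1) (i : ZMod T)
    (v : V) : σ (avgProj η σ i v) = η ^ i.val • avgProj η σ i v := by
  have hη0 : η ≠ 0 := hη.ne_zero (NeZero.ne T)
  rw [avgProj_apply, map_smul, map_sum, smul_comm (η ^ i.val) ((T:ℂ)⁻¹)]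
  congr 1
  simp_rw [map_smul]
  rw [Finset.smul_sum]
  have key : ∀ k, σ ((σ ^ k) v) = (σ ^ (k+1)) v := by
    intro k; rw [pow_succ', Module.End.mul_apply]
  simp_rw [key, smul_smul]
  set F : ℕ → V := fun k => (η ^ i.val * (η ^ (i.val * k))⁻¹) • (σ ^ k) v with hF
  have hcoef : ∀ k, (η ^ (i.val * k))⁻¹ • (σ ^ (k+1)) v = F (k + 1) := by
    intro k
    rw [hF]
    congr 1
    have hη0' : η ^ (i.val * k) ≠ 0 := pow_ne_zero _ hη0
    rw [mul_add, mul_one, pow_add]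
    field_simp
  have hFT : F T = F 0 := by
    rw [hF]
    simp only [pow_zero, hσ]
    congr 2
    rw [mul_comm i.val, pow_mul, hη.pow_eq_one, one_pow, inv_one, mul_zero, pow_zero, inv_one]
  have h1 : ∑ k ∈ Finset.range (T+1), F k = ∑ k ∈ Finset.range T, F (k+1) + F 0 :=
    Finset.sum_range_succ' F T
  have h2 : ∑ k ∈ Finset.range (T+1), F k = ∑ k ∈ Finset.range T, F k + F T :=
    Finset.sum_range_succ F T
  have h3 : ∑ k ∈ Finset.range T, F (k+1) = ∑ k ∈ Finset.range T, F k := by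
    have := h1.symm.trans h2
    rw [hFT] at this
    exact add_right_cancel this
  calc ∑ k ∈ Finset.range T, (η ^ (i.val * k))⁻¹ • (σ ^ (k+1)) v
      = ∑ k ∈ Finset.range T, F (k+1) := by simp_rw [hcoef]
    _ = ∑ k ∈ Finset.range T, F k := h3

lemma avgProj_component (hη : IsPrimitiveRoot η T) (σ : Module.End ℂ V)
    {w : V} (m : ZMod T → V) (hm : ∀ j, σ (m j) = η ^ (j : ZMod T).val • m j)
    (hw : ∑ j : ZMod T, m j = w) (i : ZMod T) : avgProj η σ i w = m i := by
  rw [← hw, map_sum]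
  rw [Finset.sum_congr rfl (fun j _ => avgProj_apply_of_eig hη σ (hm j) i)]
  simp

end Proj

section Dixmier

/-- Dixmier's version of Schur's lemma: an `A`-endomorphism of a simple module of countable
`ℂ`-dimension is a scalar. -/
lemma dixmier_schur {A : Type*} [Ring A] [Algebra ℂ A]
    {M : Type*} [AddCommGroup M] [Module ℂ M] [Module A M] [IsScalarTower ℂ A M]
    [IsSimpleModule A M] (hM : Module.rank ℂ M ≤ ℵ₀) (f : M →ₗ[A] M) :
    ∃ c : ℂ, ∀ x : M, f x = c • x := by
  classical
  by_contra hcon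
  push_neg at hcon
  haveI : Nontrivial M := IsSimpleModule.nontrivial A M
  -- the endomorphism algebra
  have hne : ∀ c : ℂ, f - c • (1 : M →ₗ[A] M) ≠ 0 := by
    intro c h
    obtain ⟨x, hx⟩ := hcon c
    apply hx
    have := congrArg (fun φ : M →ₗ[A] M => φ x) h
    simpa [sub_smul, sub_eq_zero] using this
  have hbij : ∀ c : ℂ, Function.Bijective (f - c • (1 : M →ₗ[A] M)) := fun c =>
    LinearMap.bijective_of_ne_zero (hne c)
  obtain ⟨u₀, hu₀⟩ := exists_ne (0 : M)
  set fc : ℂ → (M →ₗ[A] M) := fun c => f - c • 1 with hfc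
  set w : ℂ → M := fun c => Function.surjInv (hbij c).surjective u₀ with hwdef
  have hw : ∀ c : ℂ, fc c (w c) = u₀ := fun c => Function.surjInv_eq _ _
  -- aeval facts
  have haeval_XC : ∀ c : ℂ, Polynomial.aeval f (Polynomial.X - Polynomial.C c) = fc c := by
    intro c
    rw [map_sub, Polynomial.aeval_X, Polynomial.aeval_C, hfc, Algebra.algebraMap_eq_smul_one]
  have hsmulG : ∀ (G : M →ₗ[A] M) (c : ℂ) (x : M), G (c • x) = c • G x := by
    intro G c x
    rw [← algebraMap_smul A c x, G.map_smul, algebraMap_smul]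
  have haeval_ne : ∀ p : Polynomial ℂ, p ≠ 0 → Function.Injective (Polynomial.aeval f p) := by
    intro p hp
    have hsplit := Polynomial.Splits.eq_prod_roots (IsAlgClosed.splits p)
    have : IsUnit (Polynomial.aeval f p) := by
      rw [hsplit, map_mul, Polynomial.aeval_C]
      refine ((isUnit_iff_ne_zero.2 (Polynomial.leadingCoeff_ne_zero.2 hp)).map
        (algebraMap ℂ (M →ₗ[A] M))).mul ?_
      rw [← Multiset.prod_toList, map_list_prod]
      refine List.prod_isUnit fun x hx => ?_
      rw [List.mem_map] at hx
      obtain ⟨q, hq, rfl⟩ := hx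
      rw [Multiset.mem_toList, Multiset.mem_map] at hq
      obtain ⟨r, _, rfl⟩ := hq
      rw [haeval_XC r, Module.End.isUnit_iff]
      exact hbij r
    exact ((Module.End.isUnit_iff _).1 this).injective
  -- linear independence of the w c
  have hli : LinearIndependent ℂ w := by
    rw [linearIndependent_iff']
    intro s lam hsum c₀ hc₀
    set p : Polynomial ℂ := ∑ c ∈ s, Polynomial.C (lam c) *
      ∏ c' ∈ s.erase c, (Polynomial.X - Polynomial.C c') with hp
    have hstep : ∀ c ∈ s,
        Polynomial.aeval f (∏ c' ∈ s, (Polynomial.X - Polynomial.C c')) (w c)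
        = Polynomial.aeval f (∏ c' ∈ s.erase c, (Polynomial.X - Polynomial.C c')) u₀ := by
      intro c hc
      rw [← Finset.prod_erase_mul s _ hc, map_mul, Module.End.mul_apply, haeval_XC c, hw c]
    have hzero : Polynomial.aeval f p u₀ = 0 := by
      have h1 : Polynomial.aeval f p u₀ = ∑ c ∈ s, lam c •
          Polynomial.aeval f (∏ c' ∈ s.erase c, (Polynomial.X - Polynomial.C c')) u₀ := by
        rw [hp, map_sum, LinearMap.sum_apply]
        refine Finset.sum_congr rfl fun c _ => ?_
        rw [map_mul, Polynomial.aeval_C, Module.End.mul_apply, Algebra.algebraMap_eq_smul_one,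
          LinearMap.smul_apply, Module.End.one_apply]
      rw [h1, ← Finset.sum_congr rfl (fun c hc => by rw [← hstep c hc])]
      have h2 : ∑ c ∈ s, lam c •
          Polynomial.aeval f (∏ c' ∈ s, (Polynomial.X - Polynomial.C c')) (w c)
          = Polynomial.aeval f (∏ c' ∈ s, (Polynomial.X - Polynomial.C c'))
            (∑ c ∈ s, lam c • w c) := by
        rw [map_sum]
        refine Finset.sum_congr rfl fun c _ => ?_
        rw [hsmulG]
      rw [h2, hsum, map_zero]
    have hp0 : p = 0 := by
      by_contra hp0
      exact hu₀ (haeval_ne p hp0 (by simpa using hzero))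
    -- evaluate p at c₀
    have := congrArg (Polynomial.eval c₀) hp0
    rw [hp] at this
    simp only [Polynomial.eval_finset_sum, Polynomial.eval_mul, Polynomial.eval_C,
      Polynomial.eval_prod, Polynomial.eval_sub, Polynomial.eval_X, Polynomial.eval_zero] at this
    rw [Finset.sum_eq_single c₀] at this
    · have hprod : ∏ c' ∈ s.erase c₀, (c₀ - c') ≠ 0 := by
        rw [Finset.prod_ne_zero_iff]
        intro c' hc'
        have := (Finset.mem_erase.1 hc').1
        intro h
        exact this (by linear_combination -h)
      rcases mul_eq_zero.1 this with h | h
      · exact h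
      · exact absurd h hprod
    · intro c hc hcc₀
      have : (c₀ : ℂ) ∈ s.erase c := Finset.mem_erase.2 ⟨Ne.symm hcc₀, hc₀⟩
      rw [Finset.prod_eq_zero this (by ring), mul_zero]
    · intro h
      exact absurd hc₀ h
  -- cardinality contradiction
  have hcard := hli.cardinal_lift_le_rank
  rw [Cardinal.mk_complex, Cardinal.lift_continuum] at hcard
  exact absurd (hcard.trans ((Cardinal.lift_le.2 hM).trans_eq Cardinal.lift_aleph0))
    (not_le.2 Cardinal.aleph0_lt_continuum)

end Dixmier

private lemma algEquiv_iterate {A : Type*} [Ring A] [Algebra ℂ A] (g : A ≃ₐ[ℂ] A) (n : ℕ)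
    (a : A) : (⇑g)^[n] a = (g ^ n) a := by
  induction n with
  | zero => rfl
  | succ k ih => rw [Function.iterate_succ', Function.comp_apply, ih, pow_succ']; rfl

set_option maxHeartbeats 1000000 in
set_option synthInstance.maxHeartbeats 400000 in
/-- Let `A` be a `ℂ`-algebra of countable dimension, `g` a `ℂ`-algebra
automorphism of `A` of finite order `T`, and `M` a simple `A`-module.  Suppose
`φ : M → M` is a `ℂ`-linear bijection with `φ(a • m) = (g·a) • φ(m)` and `φ^T = id`.
Fix a primitive `T`-th root of unity `η`, and set `M_i = {m : φ m = η^i m}`,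
`A_j = {a : g·a = η^j a}`.  Then:
(1) `M = ⊕_i M_i` and `A_j • M_i ⊆ M_{i+j mod T}`;
(2) each nonzero `M_i` is a simple `A^⟨g⟩`-module;
(3) for `i ≠ j`, nonzero `M_i` and `M_j` are non-isomorphic as `A^⟨g⟩`-modules. -/
theorem eigenspace_decomposition_simple_nonisomorphic
    {A : Type*} [Ring A] [Algebra ℂ A]
    (hA : Module.rank ℂ A ≤ ℵ₀)
    (g : A ≃ₐ[ℂ] A) {T : ℕ} (hT : 0 < T) (hg : orderOf g = T)
    {M : Type*} [AddCommGroup M] [Module ℂ M] [Module A M] [IsScalarTower ℂ A M]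
    [IsSimpleModule A M]
    (φ : M ≃ₗ[ℂ] M)
    (hφ : ∀ (a : A) (m : M), φ (a • m) = (g a) • φ m)
    (hφT : φ ^ T = 1)
    (η : ℂ) (hη : IsPrimitiveRoot η T) :
    (DirectSum.IsInternal fun i : ZMod T => phiEigenspace g η φ hφ i) ∧
    (∀ (i j : ZMod T), ∀ a ∈ autEigenspace g η j, ∀ m ∈ phiEigenspace g η φ hφ i,
        a • m ∈ phiEigenspace g η φ hφ (i + j)) ∧
    (∀ i : ZMod T, phiEigenspace g η φ hφ i ≠ ⊥ →
        IsSimpleModule (cyclicFixedSubalgebra g) (phiEigenspace g η φ hφ i)) ∧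
    (∀ i j : ZMod T, i ≠ j →
        phiEigenspace g η φ hφ i ≠ ⊥ → phiEigenspace g η φ hφ j ≠ ⊥ →
        ¬ Nonempty
          ((phiEigenspace g η φ hφ i) ≃ₗ[cyclicFixedSubalgebra g]
            (phiEigenspace g η φ hφ j))) := by
  classical
  haveI : NeZero T := ⟨hT.ne'⟩
  -- powers of the linear maps
  have hσM : (φ.toLinearMap : Module.End ℂ M) ^ T = 1 := by
    ext m
    have h1 : ((φ.toLinearMap : Module.End ℂ M) ^ T) m = (⇑φ)^[T] m := by
      rw [Module.End.pow_apply]; rfl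
    rw [h1, ← LinearEquiv.pow_apply, hφT]; rfl
  have hgT : g ^ T = 1 := by rw [← hg]; exact pow_orderOf_eq_one g
  have hσA : (g.toLinearMap : Module.End ℂ A) ^ T = 1 := by
    ext a
    have h1 : ((g.toLinearMap : Module.End ℂ A) ^ T) a = (⇑g)^[T] a := by
      rw [Module.End.pow_apply]; rfl
    rw [h1, algEquiv_iterate g T a, hgT]; rfl
  have hmemM : ∀ (i : ZMod T) (x : M),
      x ∈ phiEigenspace g η φ hφ i ↔ φ.toLinearMap x = η ^ i.val • x := fun _ _ => Iff.rfl
  have hmemA : ∀ (j : ZMod T) (a : A),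
      a ∈ autEigenspace g η j ↔ g.toLinearMap a = η ^ j.val • a := fun _ _ => Iff.rfl
  -- part 1b
  have hAdot : ∀ (i j : ZMod T), ∀ a ∈ autEigenspace g η j, ∀ m ∈ phiEigenspace g η φ hφ i,
      a • m ∈ phiEigenspace g η φ hφ (i + j) := by
    intro i j a ha m hm
    have ha' : g a = η ^ j.val • a := ha
    have hm' : φ m = η ^ i.val • m := hm
    have hpow_mod : ∀ n : ℕ, η ^ n = η ^ (n % T) := by
      intro n
      conv_lhs => rw [← Nat.div_add_mod n T]
      rw [pow_add, pow_mul, hη.pow_eq_one, one_pow, one_mul]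
    have hpow : η ^ (j.val + i.val) = η ^ ((i + j : ZMod T)).val := by
      rw [hpow_mod, ZMod.val_add, add_comm j.val]
    show φ (a • m) = η ^ (i + j : ZMod T).val • (a • m)
    rw [hφ a m, ha', hm', smul_assoc, smul_comm a (η ^ i.val) m, smul_smul, ← pow_add, hpow]
  -- membership of averaging projections
  have hprojM_mem : ∀ (i : ZMod T) (m : M),
      avgProj η φ.toLinearMap i m ∈ phiEigenspace g η φ hφ i := fun i m =>
    (hmemM i _).2 (avgProj_eig hη _ hσM i m)
  have hprojA_mem : ∀ (j : ZMod T) (a : A),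
      avgProj η g.toLinearMap j a ∈ autEigenspace g η j := fun j a =>
    (hmemA j _).2 (avgProj_eig hη _ hσA j a)
  -- component extraction for products
  have hcomp : ∀ (b : A) (m : M) (i : ZMod T), φ.toLinearMap m = η ^ i.val • m →
      ∀ k : ZMod T, avgProj η φ.toLinearMap k (b • m)
        = (avgProj η g.toLinearMap (k - i) b) • m := by
    intro b m i him k
    refine avgProj_component hη _
      (m := fun k => (avgProj η g.toLinearMap (k - i) b) • m) (fun j => ?_) ?_ k
    · have hmem := hAdot i (j - i) _ (hprojA_mem (j - i) b) m ((hmemM i m).1 him)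
      have hij : i + (j - i) = j := by ring
      rw [hij] at hmem
      exact (hmemM j _).1 hmem
    · rw [← Finset.sum_smul]
      have hsum : ∑ j : ZMod T, avgProj η g.toLinearMap (j - i) b
          = ∑ j : ZMod T, avgProj η g.toLinearMap j b :=
        Fintype.sum_equiv (Equiv.subRight i) _ _ (fun j => rfl)
      rw [hsum, sum_avgProj hη _ hσA]
  -- the zero-component of the averaging projection on A lands in the fixed subalgebra
  have hproj0 : ∀ b : A, avgProj η g.toLinearMap (0 : ZMod T) b ∈ cyclicFixedSubalgebra g := by
    intro b
    have := avgProj_eig hη _ hσA 0 b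
    show g _ = _
    rw [show ((0 : ZMod T)).val = 0 from ZMod.val_zero, pow_zero, one_smul] at this
    exact this
  refine ⟨?_, hAdot, ?_, ?_⟩
  · -- internal direct sum
    constructor
    · rw [injective_iff_map_eq_zero]
      intro x hx
      have hxsum : ∑ i : ZMod T, ((x i : M)) = 0 := by
        have hxd := DirectSum.sum_univ_of x
        calc ∑ i : ZMod T, ((x i : M))
            = DirectSum.coeAddMonoidHom (fun i => phiEigenspace g η φ hφ i)
              (∑ i : ZMod T, DirectSum.of _ i (x i)) := by
              rw [map_sum]
              exact Finset.sum_congr rfl fun i _ =>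
                (DirectSum.coeAddMonoidHom_of _ _ _).symm
          _ = 0 := by rw [hxd]; exact hx
      refine DFinsupp.ext fun i => ?_
      have := avgProj_component hη φ.toLinearMap (m := fun j => ((x j : M)))
        (fun j => (hmemM j _).1 (x j).2) hxsum i
      rw [map_zero] at this
      exact ZeroMemClass.coe_eq_zero.1 this.symm
    · intro m
      refine ⟨∑ i : ZMod T, DirectSum.of (fun i => ↥(phiEigenspace g η φ hφ i)) i
        ⟨avgProj η φ.toLinearMap i m, hprojM_mem i m⟩, ?_⟩
      rw [map_sum]
      calc ∑ i : ZMod T, DirectSum.coeAddMonoidHom (fun i => phiEigenspace g η φ hφ i)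
            (DirectSum.of _ i ⟨avgProj η φ.toLinearMap i m, hprojM_mem i m⟩)
          = ∑ i : ZMod T, avgProj η φ.toLinearMap i m :=
            Finset.sum_congr rfl fun i _ => DirectSum.coeAddMonoidHom_of _ _ _
        _ = m := sum_avgProj hη _ hσM m
  · -- simplicity
    intro i hibot
    obtain ⟨m0, hm0mem, hm0⟩ := (Submodule.ne_bot_iff _).1 hibot
    haveI : Nontrivial (Submodule (cyclicFixedSubalgebra g) ↥(phiEigenspace g η φ hφ i)) := by
      refine ⟨⊥, ⊤, fun hbt => hm0 ?_⟩
      have : (⟨m0, hm0mem⟩ : ↥(phiEigenspace g η φ hφ i)) ∈ (⊥ :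
          Submodule (cyclicFixedSubalgebra g) ↥(phiEigenspace g η φ hφ i)) := by
        rw [hbt]; trivial
      have h0 := (Submodule.mem_bot _).1 this
      exact congrArg Subtype.val h0
    refine { eq_bot_or_eq_top := fun N => ?_ }
    by_cases hN : N = ⊥
    · exact Or.inl hN
    · refine Or.inr (Submodule.eq_top_iff'.2 fun w => ?_)
      obtain ⟨n, hnN, hn0⟩ := (Submodule.ne_bot_iff N).1 hN
      have hn0' : (n : M) ≠ 0 := fun h => hn0 (Subtype.ext h)
      obtain ⟨a, ha⟩ := IsSimpleModule.toSpanSingleton_surjective A (M := M) hn0' (w : M)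
      rw [LinearMap.toSpanSingleton_apply] at ha
      have hn_eig : φ.toLinearMap (n : M) = η ^ i.val • (n : M) := (hmemM i _).1 n.2
      have hw_eig : φ.toLinearMap (w : M) = η ^ i.val • (w : M) := (hmemM i _).1 w.2
      have h1 : avgProj η φ.toLinearMap i ((w : M))
          = (avgProj η g.toLinearMap (0 : ZMod T) a) • (n : M) := by
        rw [← ha, hcomp a (n : M) i hn_eig i, sub_self]
      have h2 : avgProj η φ.toLinearMap i ((w : M)) = (w : M) := by
        rw [avgProj_apply_of_eig hη _ hw_eig, if_pos rfl]
      have hw_eq : w = (⟨avgProj η g.toLinearMap (0 : ZMod T) a, hproj0 a⟩ :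
          cyclicFixedSubalgebra g) • n := by
        apply Subtype.ext
        rw [SetLike.val_smul, ← h2, h1]
        rfl
      rw [hw_eq]
      exact N.smul_mem _ hnN
  · -- non-isomorphism
    rintro i j hij hib hjb ⟨ψ⟩
    obtain ⟨uM, humem, hu0⟩ := (Submodule.ne_bot_iff _).1 hib
    set u : ↥(phiEigenspace g η φ hφ i) := ⟨uM, humem⟩ with hu
    set v : ↥(phiEigenspace g η φ hφ j) := ψ u with hv
    have hv0 : (v : M) ≠ 0 := by
      intro h
      have : v = 0 := Subtype.ext h
      rw [hv] at this
      exact hu0 (congrArg Subtype.val (ψ.map_eq_zero_iff.1 this))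
    have hu_eig : φ.toLinearMap (u : M) = η ^ i.val • (u : M) := (hmemM i _).1 u.2
    have hv_eig : φ.toLinearMap (v : M) = η ^ j.val • (v : M) := (hmemM j _).1 v.2
    -- the A-submodule {a • v : a • u = 0}
    set N : Submodule A M :=
      { carrier := {x : M | ∃ a : A, a • (u : M) = 0 ∧ x = a • (v : M)}
        add_mem' := by
          rintro x y ⟨a, hau, rfl⟩ ⟨b, hbu, rfl⟩
          exact ⟨a + b, by rw [add_smul, hau, hbu, add_zero], by rw [add_smul]⟩
        zero_mem' := ⟨0, by rw [zero_smul], by rw [zero_smul]⟩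
        smul_mem' := by
          rintro c x ⟨a, hau, rfl⟩
          exact ⟨c * a, by rw [mul_smul, hau, smul_zero], by rw [mul_smul]⟩ } with hNdef
    rcases eq_bot_or_eq_top N with hN | hN
    · -- N = ⊥ : construct an A-endomorphism sending u to v
      have hann : ∀ a : A, a • (u : M) = 0 → a • (v : M) = 0 := by
        intro a ha
        have hmem : a • (v : M) ∈ N := ⟨a, ha, rfl⟩
        rw [hN] at hmem
        exact (Submodule.mem_bot A).1 hmem
      set q : A →ₗ[A] M := LinearMap.toSpanSingleton A M (u : M) with hq
      have hqsurj : Function.Surjective q := IsSimpleModule.toSpanSingleton_surjective A hu0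
      have hle : LinearMap.ker q ≤ LinearMap.ker (LinearMap.toSpanSingleton A M (v : M)) := by
        intro a haq
        rw [LinearMap.mem_ker, LinearMap.toSpanSingleton_apply] at haq ⊢
        exact hann a haq
      set e := q.quotKerEquivOfSurjective hqsurj with he
      set f : M →ₗ[A] M :=
        (Submodule.liftQ (LinearMap.ker q) (LinearMap.toSpanSingleton A M (v : M)) hle).comp
          e.symm.toLinearMap with hf
      have hfsmul : ∀ a : A, f (a • (u : M)) = a • (v : M) := by
        intro a
        have h1 : e (Submodule.Quotient.mk a) = a • (u : M) := rfl
        have h2 : e.symm (a • (u : M)) = Submodule.Quotient.mk a := by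
          rw [← h1, e.symm_apply_apply]
        rw [hf]
        simp only [LinearMap.coe_comp, Function.comp_apply, LinearEquiv.coe_coe, h2,
          Submodule.liftQ_apply, LinearMap.toSpanSingleton_apply]
      have hfu : f (u : M) = (v : M) := by
        have := hfsmul 1
        rwa [one_smul, one_smul] at this
      have hrank : Module.rank ℂ M ≤ ℵ₀ := by
        have hsurj' : Function.Surjective
            ((LinearMap.toSpanSingleton A M (u : M)).restrictScalars ℂ) := hqsurj
        have h := LinearMap.lift_rank_le_of_surjective
          ((LinearMap.toSpanSingleton A M (u : M)).restrictScalars ℂ) hsurj'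
        have h3 := h.trans (Cardinal.lift_le.2 hA)
        rw [Cardinal.lift_aleph0] at h3
        exact Cardinal.lift_le_aleph0.1 h3
      obtain ⟨c, hc⟩ := dixmier_schur hrank f
      have hvc : (v : M) = c • (u : M) := by rw [← hfu, hc]
      have h1 : avgProj η φ.toLinearMap i ((v : M)) = 0 := by
        rw [avgProj_apply_of_eig hη _ hv_eig, if_neg hij]
      have h2 : avgProj η φ.toLinearMap i ((v : M)) = c • (u : M) := by
        rw [hvc, map_smul, avgProj_apply_of_eig hη _ hu_eig, if_pos rfl]
      have hcu0 : c • (u : M) = 0 := by rw [← h2, h1]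
      rcases smul_eq_zero.1 hcu0 with hc0 | hu00
      · exact hv0 (by rw [hvc, hc0, zero_smul])
      · exact hu0 hu00
    · -- N = ⊤ : produce a fixed element acting as 1 on u and 0 on v
      have hvN : (v : M) ∈ N := by rw [hN]; trivial
      obtain ⟨a, hau, hav⟩ := hvN
      set b : A := 1 - a with hb
      have hbu : b • (u : M) = (u : M) := by rw [hb, sub_smul, one_smul, hau, sub_zero]
      have hbv : b • (v : M) = 0 := by rw [hb, sub_smul, one_smul, ← hav, sub_self]
      set b0 := avgProj η g.toLinearMap (0 : ZMod T) b with hb0def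
      have h1 : b0 • (u : M) = (u : M) := by
        have hcu := hcomp b (u : M) i hu_eig i
        rw [hbu, sub_self, avgProj_apply_of_eig hη _ hu_eig, if_pos rfl] at hcu
        exact hcu.symm
      have h2 : b0 • (v : M) = 0 := by
        have hcv := hcomp b (v : M) j hv_eig j
        rw [hbv, sub_self, map_zero] at hcv
        exact hcv.symm
      have hru : (⟨b0, hproj0 b⟩ : cyclicFixedSubalgebra g) • u = u := by
        apply Subtype.ext
        rw [SetLike.val_smul]
        exact h1
      have : (v : M) = b0 • (v : M) := by
        conv_lhs => rw [hv, ← hru, map_smul]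
        rfl
      rw [h2] at this
      exact hv0 this
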